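/- Let A ∈ K^{6×3}, let (h_1,…,h_6) ∈ ℝ^6, and set D = Σ_{i=1}^3 min_{j=1}^6 (deg a_{ji} + h_j); assume D < ∞. Let u, v, y, z ∈ {1,…,6} be pairwise distinct, and suppose that for every three pairwise distinct indices p, q, r ∈ {u,v,y,z} the 3×3 submatrix A[p,q,r] of A formed by rows p, q, r satisfies deg det A[p,q,r] = D − (h_p + h_q + h_r). Then there exist x_1,…,x_6 ∈ K such that deg x_j = h_j for every j ∈ {1,…,6} and Σ_{j=1}^6 a_{ji} x_j = 0 for every i ∈ {1,2,3}. -/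

import Mathlib

noncomputable section

/-- The field of generalized power series over ℝ with complex coefficients. -/
abbrev K : Type := HahnSeries ℝ ℂ

open Classical in
/-- The degree of an element of `K`: the least exponent of its support, `⊤` for `0`. -/
noncomputable def Kdeg (a : K) : WithTop ℝ :=
  if a = 0 then ⊤ else ((HahnSeries.order a : ℝ) : WithTop ℝ)

/-- A square real matrix is tropically non-singular if the minimum in the tropical
permanent is attained by exactly one permutation. -/
def TropNonsing {k : ℕ} (S : Matrix (Fin k) (Fin k) ℝ) : Prop :=
  ∃! σ : Equiv.Perm (Fin k), ∀ τ : Equiv.Perm (Fin k),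
    (∑ i, S i (σ i)) ≤ ∑ i, S i (τ i)

/-- The tropical rank: the largest size of a tropically non-singular square submatrix. -/
noncomputable def tropRank {m n : ℕ} (A : Matrix (Fin m) (Fin n) ℝ) : ℕ :=
  sSup {r : ℕ | ∃ (ρ : Fin r → Fin m) (c : Fin r → Fin n),
    Function.Injective ρ ∧ Function.Injective c ∧ TropNonsing (A.submatrix ρ c)}

/-- A matrix over `K` is a lift of a real matrix if degrees of entries match. -/
def IsLift {m n : ℕ} (F : Matrix (Fin m) (Fin n) K) (B : Matrix (Fin m) (Fin n) ℝ) : Prop :=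
  ∀ i j, Kdeg (F i j) = (B i j : WithTop ℝ)

/-- The Kapranov rank: the smallest rank over `K` of a lift. -/
noncomputable def kapRank {m n : ℕ} (B : Matrix (Fin m) (Fin n) ℝ) : ℕ :=
  sInf {r : ℕ | ∃ F : Matrix (Fin m) (Fin n) K, IsLift F B ∧ F.rank = r}

/-- The tuple `lam` realizes the tropical dependence of the rows of `A`. -/
def Realizes {m n : ℕ} (lam : Fin m → WithTop ℝ) (A : Matrix (Fin m) (Fin n) ℝ) : Prop :=
  (∃ τ, lam τ ≠ ⊤) ∧
  ∀ k : Fin n, ∃ τ₁ τ₂ : Fin m, τ₁ ≠ τ₂ ∧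
    (∀ τ, lam τ₁ + (A τ₁ k : WithTop ℝ) ≤ lam τ + (A τ k : WithTop ℝ)) ∧
    (∀ τ, lam τ₂ + (A τ₂ k : WithTop ℝ) ≤ lam τ + (A τ k : WithTop ℝ))

open Classical in
/-- The pattern of a real matrix, with entries in `{0, ∞} ⊆ ℝ ∪ {∞}`. -/
noncomputable def pat {m n : ℕ} (A : Matrix (Fin m) (Fin n) ℝ) (u : Fin m) (v : Fin n) :
    WithTop ℝ :=
  if ∀ i, A u v ≤ A i v then 0 else ⊤

/-- The support of the `j`-th column of the pattern of `A`. -/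
def colSupp {m n : ℕ} (A : Matrix (Fin m) (Fin n) ℝ) (j : Fin n) : Set (Fin m) :=
  {u | ∀ i, A u j ≤ A i j}


section KdegAPI

lemma Kdeg_eq (a : K) : Kdeg a = a.orderTop := by
  unfold Kdeg
  split_ifs with h
  · simp [h]
  · rw [HahnSeries.order_eq_orderTop_of_ne_zero h]

lemma Kdeg_eq_top_iff {a : K} : Kdeg a = ⊤ ↔ a = 0 := by
  rw [Kdeg_eq]; exact HahnSeries.orderTop_eq_top

lemma Kdeg_zero : Kdeg (0 : K) = ⊤ := by simp [Kdeg_eq]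

lemma Kdeg_mul (a b : K) : Kdeg (a * b) = Kdeg a + Kdeg b := by
  rcases eq_or_ne a 0 with rfl | ha
  · simp [Kdeg_zero]
  rcases eq_or_ne b 0 with rfl | hb
  · simp [Kdeg_zero]
  have hab : a * b ≠ 0 := mul_ne_zero ha hb
  rw [Kdeg_eq, Kdeg_eq, Kdeg_eq, ← HahnSeries.order_eq_orderTop_of_ne_zero ha,
    ← HahnSeries.order_eq_orderTop_of_ne_zero hb, ← HahnSeries.order_eq_orderTop_of_ne_zero hab,
    HahnSeries.order_mul ha hb, WithTop.coe_add]

lemma Kdeg_single {r : ℝ} {c : ℂ} (hc : c ≠ 0) :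
    Kdeg (HahnSeries.single r c) = (r : WithTop ℝ) := by
  rw [Kdeg_eq, HahnSeries.orderTop_single hc]

lemma Kdeg_one : Kdeg (1 : K) = 0 := by
  rw [Kdeg_eq, HahnSeries.orderTop_one]

lemma Kdeg_neg (a : K) : Kdeg (-a) = Kdeg a := by
  rw [Kdeg_eq, Kdeg_eq, HahnSeries.orderTop_neg]

lemma le_Kdeg_add {c : WithTop ℝ} {a b : K} (ha : c ≤ Kdeg a) (hb : c ≤ Kdeg b) :
    c ≤ Kdeg (a + b) := by
  rw [Kdeg_eq] at *
  exact le_trans (le_min ha hb) HahnSeries.min_orderTop_le_orderTop_add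

lemma le_Kdeg_sum {ι : Type*} {c : WithTop ℝ} (s : Finset ι) (f : ι → K)
    (hf : ∀ j ∈ s, c ≤ Kdeg (f j)) : c ≤ Kdeg (∑ j ∈ s, f j) := by
  classical
  induction s using Finset.induction_on with
  | empty => simp [Kdeg_zero]
  | @insert x s' hx ih =>
      rw [Finset.sum_insert hx]
      exact le_Kdeg_add (hf x (by simp)) (ih fun j hj => hf j (by simp [hj]))

lemma Kdeg_prod {ι : Type*} (s : Finset ι) (f : ι → K) :
    Kdeg (∏ j ∈ s, f j) = ∑ j ∈ s, Kdeg (f j) := by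
  classical
  induction s using Finset.induction_on with
  | empty => simp [Kdeg_one]
  | @insert x s' hx ih =>
      rw [Finset.prod_insert hx, Finset.sum_insert hx, Kdeg_mul, ih]

lemma Kdeg_le_of_coeff_ne {a : K} {e : ℝ} (h : a.coeff e ≠ 0) : Kdeg a ≤ (e : WithTop ℝ) := by
  rw [Kdeg_eq]; exact HahnSeries.orderTop_le_of_coeff_ne_zero h

lemma coeff_ne_of_Kdeg_eq {a : K} {e : ℝ} (h : Kdeg a = (e : WithTop ℝ)) : a.coeff e ≠ 0 := by
  rw [Kdeg_eq] at h
  exact HahnSeries.coeff_orderTop_ne h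

lemma Kdeg_eq_of_coeff {a : K} {e : ℝ} (hle : (e : WithTop ℝ) ≤ Kdeg a) (h : a.coeff e ≠ 0) :
    Kdeg a = (e : WithTop ℝ) :=
  le_antisymm (Kdeg_le_of_coeff_ne h) hle

lemma Kdeg_zsmul_unit (u : ℤˣ) (a : K) : Kdeg ((u : ℤ) • a) = Kdeg a := by
  rcases Int.units_eq_one_or u with h | h <;> simp [h, Kdeg_neg]

lemma Kdeg_inv {a : K} {d : ℝ} (h : Kdeg a = (d : WithTop ℝ)) :
    Kdeg (a⁻¹) = ((-d : ℝ) : WithTop ℝ) := by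
  have ha : a ≠ 0 := by
    intro h0; rw [h0, Kdeg_zero] at h; exact (WithTop.top_ne_coe) h
  have h1 : Kdeg (a * a⁻¹) = 0 := by rw [mul_inv_cancel₀ ha, Kdeg_one]
  rw [Kdeg_mul, h] at h1
  have hinv : a⁻¹ ≠ 0 := inv_ne_zero ha
  have hnt : Kdeg a⁻¹ ≠ ⊤ := fun ht => hinv (Kdeg_eq_top_iff.mp ht)
  obtain ⟨e, he⟩ := WithTop.ne_top_iff_exists.mp hnt
  rw [← he] at h1 ⊢
  rw [← WithTop.coe_add] at h1
  have : d + e = 0 := by exact_mod_cast h1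
  have : e = -d := by linarith
  rw [this]

/-- shifting a coercion inequality in `WithTop ℝ` -/
lemma wt_shift {a b : ℝ} {x : WithTop ℝ} :
    ((a : ℝ) : WithTop ℝ) ≤ x + (b : WithTop ℝ) ↔ ((a - b : ℝ) : WithTop ℝ) ≤ x := by
  induction x using WithTop.recTopCoe with
  | top => simp
  | coe c =>
      rw [← WithTop.coe_add, WithTop.coe_le_coe, WithTop.coe_le_coe]
      constructor <;> intro <;> linarith

lemma inj3 {a b c : Fin 6} (hab : a ≠ b) (hac : a ≠ c) (hbc : b ≠ c) :
    Function.Injective ![a, b, c] := by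
  intro i j hij
  fin_cases i <;> fin_cases j <;> simp_all

lemma upd0 {α : Type*} (a b c d : α) : Function.update ![a, b, c] (0 : Fin 3) d = ![d, b, c] := by
  funext k; fin_cases k <;> simp [Function.update]

lemma upd1 {α : Type*} (a b c d : α) : Function.update ![a, b, c] (1 : Fin 3) d = ![a, d, c] := by
  funext k; fin_cases k <;> simp [Function.update]

lemma upd2 {α : Type*} (a b c d : α) : Function.update ![a, b, c] (2 : Fin 3) d = ![a, b, d] := by
  funext k; fin_cases k <;> simp [Function.update]

lemma fin3_cases (P : Fin 3 → Prop) (h0 : P 0) (h1 : P 1) (h2 : P 2) : ∀ p, P p := by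
  intro p; fin_cases p <;> assumption

end KdegAPI

set_option maxHeartbeats 1000000 in
theorem three_equation_system (A : Matrix (Fin 6) (Fin 3) K) (h : Fin 6 → ℝ) (D : ℝ)
    (hD : (D : WithTop ℝ) =
      ∑ i : Fin 3, Finset.univ.inf (fun j : Fin 6 => Kdeg (A j i) + (h j : WithTop ℝ)))
    (u v y z : Fin 6)
    (huv : u ≠ v) (huy : u ≠ y) (huz : u ≠ z) (hvy : v ≠ y) (hvz : v ≠ z) (hyz : y ≠ z)
    (hdet : ∀ p q r : Fin 6, p ∈ ({u, v, y, z} : Set (Fin 6)) →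
      q ∈ ({u, v, y, z} : Set (Fin 6)) → r ∈ ({u, v, y, z} : Set (Fin 6)) →
      p ≠ q → p ≠ r → q ≠ r →
      Kdeg ((A.submatrix ![p, q, r] id).det) = ((D - (h p + h q + h r) : ℝ) : WithTop ℝ)) :
    ∃ x : Fin 6 → K, (∀ j, Kdeg (x j) = (h j : WithTop ℝ)) ∧
      ∀ i : Fin 3, ∑ j, A j i * x j = 0 := by
  classical
  -- extract the real minima μ i
  set m : Fin 3 → WithTop ℝ :=
    fun i => Finset.univ.inf (fun j : Fin 6 => Kdeg (A j i) + (h j : WithTop ℝ)) with hm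
  have hmt : ∀ i, m i ≠ ⊤ := by
    intro i hti
    have : (D : WithTop ℝ) = ⊤ := by
      rw [hD, WithTop.sum_eq_top]
      exact ⟨i, Finset.mem_univ i, hti⟩
    exact WithTop.coe_ne_top this
  choose μ hμ using fun i => WithTop.ne_top_iff_exists.mp (hmt i)
  have hDsum : D = ∑ i, μ i := by
    have : (D : WithTop ℝ) = ((∑ i, μ i : ℝ) : WithTop ℝ) := by
      rw [hD, WithTop.coe_sum]
      exact Finset.sum_congr rfl fun i _ => (hμ i).symm
    exact_mod_cast this
  have hentry : ∀ i j, ((μ i : ℝ) : WithTop ℝ) ≤ Kdeg (A j i) + ((h j : ℝ) : WithTop ℝ) := by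
    intro i j
    rw [hμ i]
    exact Finset.inf_le (Finset.mem_univ j)
  -- lower bound for 3×3 minors
  have minor_lb : ∀ r : Fin 3 → Fin 6,
      ((D - ∑ k, h (r k) : ℝ) : WithTop ℝ) ≤ Kdeg ((A.submatrix r id).det) := by
    intro r
    rw [Matrix.det_apply]
    apply le_Kdeg_sum
    intro σ _
    rw [Units.smul_def, Kdeg_zsmul_unit, Kdeg_prod]
    have step : ∀ k : Fin 3, ((μ k - h (r (σ k)) : ℝ) : WithTop ℝ) ≤
        Kdeg (A.submatrix r id (σ k) k) := by
      intro k
      rw [← wt_shift]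
      exact hentry k (r (σ k))
    calc ((D - ∑ k, h (r k) : ℝ) : WithTop ℝ)
        = ((∑ k, (μ k - h (r (σ k))) : ℝ) : WithTop ℝ) := by
          congr 1
          rw [Finset.sum_sub_distrib, ← hDsum, Equiv.sum_comp σ (fun k => h (r k))]
      _ = ∑ k, ((μ k - h (r (σ k)) : ℝ) : WithTop ℝ) := by rw [WithTop.coe_sum]
      _ ≤ ∑ k, Kdeg (A.submatrix r id (σ k) k) := Finset.sum_le_sum fun k _ => step k
  -- memberships
  have memu : u ∈ ({u,v,y,z} : Set (Fin 6)) := by simp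
  have memv : v ∈ ({u,v,y,z} : Set (Fin 6)) := by simp
  have memy : y ∈ ({u,v,y,z} : Set (Fin 6)) := by simp
  have memz : z ∈ ({u,v,y,z} : Set (Fin 6)) := by simp
  set ρ : Fin 3 → Fin 6 := ![u, v, y] with hρ
  set M : Matrix (Fin 3) (Fin 3) K := (A.submatrix ρ id).transpose with hMdef
  set E : ℝ := D - (h u + h v + h y) with hE
  have hdetM : Kdeg M.det = ((E : ℝ) : WithTop ℝ) := by
    rw [hMdef, Matrix.det_transpose, hρ, hE]
    exact hdet u v y memu memv memy huv huy hvy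
  have hdetM0 : M.det ≠ 0 := fun h0 => by
    rw [h0, Kdeg_zero] at hdetM; exact WithTop.top_ne_coe hdetM
  set Nd : Fin 3 → Fin 6 → K := fun p j => (A.submatrix (Function.update ρ p j) id).det
    with hNddef
  have hupdcol : ∀ (p : Fin 3) (j : Fin 6),
      (Matrix.updateCol M p (fun i => A j i)).det = Nd p j := by
    intro p j
    have e1 : Matrix.updateCol M p (fun i => A j i) =
        (A.submatrix (Function.update ρ p j) id).transpose := by
      funext i q
      rw [Matrix.updateCol_apply, Matrix.transpose_apply, Matrix.submatrix_apply,
        Function.update_apply]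
      split_ifs <;> simp [hMdef]
    rw [hNddef, e1, Matrix.det_transpose]
  -- exact degrees of the distinguished minors
  have hNdz : ∀ p : Fin 3, Kdeg (Nd p z) = ((E + h (ρ p) - h z : ℝ) : WithTop ℝ) := by
    refine fin3_cases _ ?_ ?_ ?_
    · simp only [hNddef, hρ, upd0, Matrix.cons_val_zero]
      rw [hdet z v y memz memv memy hvz.symm hyz.symm hvy]
      congr 1
      simp [hE]; ring
    · simp only [hNddef, hρ, upd1, Matrix.cons_val_one, Matrix.head_cons]
      rw [hdet u z y memu memz memy huz huy hyz.symm]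
      congr 1
      simp [hE]; ring
    · simp only [hNddef, hρ, upd2, Matrix.cons_val_two, Matrix.tail_cons, Matrix.head_cons]
      rw [hdet u v z memu memv memz huv huz hvz]
      congr 1
      simp [hE]; ring
  -- lower bound for the replaced minors
  have hNdlb : ∀ p : Fin 3, ∀ j : Fin 6,
      ((E + h (ρ p) - h j : ℝ) : WithTop ℝ) ≤ Kdeg (Nd p j) := by
    refine fin3_cases _ ?_ ?_ ?_
    · intro j
      have hlb := minor_lb (Function.update ρ 0 j)
      simp only [hNddef, hρ, upd0, Matrix.cons_val_zero] at hlb ⊢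
      refine le_trans (le_of_eq ?_) hlb
      congr 1
      rw [Fin.sum_univ_three]
      simp [hE]; ring
    · intro j
      have hlb := minor_lb (Function.update ρ 1 j)
      simp only [hNddef, hρ, upd1, Matrix.cons_val_one, Matrix.head_cons] at hlb ⊢
      refine le_trans (le_of_eq ?_) hlb
      congr 1
      rw [Fin.sum_univ_three]
      simp [hE]; ring
    · intro j
      have hlb := minor_lb (Function.update ρ 2 j)
      simp only [hNddef, hρ, upd2, Matrix.cons_val_two, Matrix.tail_cons,
        Matrix.head_cons] at hlb ⊢
      refine le_trans (le_of_eq ?_) hlb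
      congr 1
      rw [Fin.sum_univ_three]
      simp [hE]; ring
  -- the complement of {u, v, y}
  set Sc : Finset (Fin 6) := ({u, v, y} : Finset (Fin 6))ᶜ with hScdef
  have hzS : z ∈ Sc := by
    simp only [hScdef, Finset.mem_compl, Finset.mem_insert, Finset.mem_singleton]
    push_neg
    exact ⟨huz.symm, hvz.symm, hyz.symm⟩
  -- the two pieces of the cramer vector
  set F0 : Fin 3 → K := fun p => (-(HahnSeries.single (h z) (1 : ℂ))) * Nd p z with hF0def
  set F1 : Fin 3 → K :=
    fun p => ∑ j ∈ Sc.erase z, (-(HahnSeries.single (h j) (1 : ℂ))) * Nd p j with hF1def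
  have hF0deg : ∀ p, Kdeg (F0 p) = ((E + h (ρ p) : ℝ) : WithTop ℝ) := by
    intro p
    simp only [hF0def]
    rw [Kdeg_mul, Kdeg_neg, Kdeg_single one_ne_zero, hNdz p, ← WithTop.coe_add]
    congr 1; ring
  have hF1lb : ∀ p, ((E + h (ρ p) : ℝ) : WithTop ℝ) ≤ Kdeg (F1 p) := by
    intro p
    simp only [hF1def]
    apply le_Kdeg_sum
    intro j _
    rw [Kdeg_mul, Kdeg_neg, Kdeg_single one_ne_zero]
    calc ((E + h (ρ p) : ℝ) : WithTop ℝ)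
        = ((h j : ℝ) : WithTop ℝ) + ((E + h (ρ p) - h j : ℝ) : WithTop ℝ) := by
          rw [← WithTop.coe_add]; congr 1; ring
      _ ≤ ((h j : ℝ) : WithTop ℝ) + Kdeg (Nd p j) := add_le_add_right (hNdlb p j) _
  -- leading coefficients
  set c0 : Fin 3 → ℂ := fun p => (F0 p).coeff (E + h (ρ p)) with hc0def
  set c1 : Fin 3 → ℂ := fun p => (F1 p).coeff (E + h (ρ p)) with hc1def
  have hc0 : ∀ p, c0 p ≠ 0 := fun p => coeff_ne_of_Kdeg_eq (hF0deg p)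
  -- choose a good ε
  obtain ⟨ε, hε⟩ := Infinite.exists_notMem_finset
    ({0, -c0 0 / c1 0, -c0 1 / c1 1, -c0 2 / c1 2} : Finset ℂ)
  have hε0 : ε ≠ 0 := by rintro rfl; exact hε (by simp)
  have hεgood : ∀ p, c0 p + ε * c1 p ≠ 0 := by
    have key : ∀ p : Fin 3, c0 p + ε * c1 p = 0 → ε = -c0 p / c1 p := by
      intro p hcon
      have hc1p : c1 p ≠ 0 := by
        rintro h0; rw [h0, mul_zero, add_zero] at hcon; exact hc0 p hcon
      field_simp
      linear_combination hcon
    refine fin3_cases _ ?_ ?_ ?_ <;> intro hcon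
    · exact hε (by rw [key 0 hcon]; simp)
    · exact hε (by rw [key 1 hcon]; simp)
    · exact hε (by rw [key 2 hcon]; simp)
  -- the outside part of the solution
  set xout : Fin 6 → K :=
    fun j => if j = z then HahnSeries.single (h z) 1 else HahnSeries.single (h j) ε with hxoutdef
  have hxoutdeg : ∀ j, Kdeg (xout j) = ((h j : ℝ) : WithTop ℝ) := by
    intro j
    simp only [hxoutdef]
    split_ifs with hjz
    · subst hjz; exact Kdeg_single one_ne_zero
    · exact Kdeg_single hε0
  set w : Fin 3 → K := fun i => -∑ j ∈ Sc, A j i * xout j with hwdef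
  -- the cramer vector
  have hcram : ∀ p, Matrix.cramer M w p = F0 p + HahnSeries.single (0 : ℝ) ε * F1 p := by
    intro p
    have hw : w = ∑ j ∈ Sc, (-(xout j)) • (fun i => A j i) := by
      funext i
      simp only [hwdef, Finset.sum_apply, Pi.smul_apply, smul_eq_mul]
      rw [← Finset.sum_neg_distrib]
      exact Finset.sum_congr rfl fun j _ => by ring
    rw [hw, map_sum]
    simp only [LinearMap.map_smul]
    rw [Finset.sum_apply]
    have hterm : ∀ j, ((-(xout j)) • Matrix.cramer M (fun i => A j i)) p
        = -(xout j) * Nd p j := by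
      intro j
      rw [Pi.smul_apply, smul_eq_mul, Matrix.cramer_apply, hupdcol]
    rw [Finset.sum_congr rfl fun j _ => hterm j]
    rw [← Finset.add_sum_erase Sc _ hzS]
    congr 1
    · simp only [hxoutdef, if_pos rfl, hF0def, neg_mul]
    · rw [hF1def, Finset.mul_sum]
      refine Finset.sum_congr rfl fun j hj => ?_
      have hjz : j ≠ z := Finset.ne_of_mem_erase hj
      have hxj : xout j = HahnSeries.single (0 : ℝ) ε * HahnSeries.single (h j) (1 : ℂ) := by
        simp only [hxoutdef, if_neg hjz, HahnSeries.single_mul_single, zero_add, mul_one]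
      rw [hxj]; ring
  -- degree of the cramer vector
  have hG : ∀ p, Kdeg (Matrix.cramer M w p) = ((E + h (ρ p) : ℝ) : WithTop ℝ) := by
    intro p
    rw [hcram p]
    apply Kdeg_eq_of_coeff
    · apply le_Kdeg_add
      · rw [hF0deg p]
      · calc ((E + h (ρ p) : ℝ) : WithTop ℝ)
            = ((0 : ℝ) : WithTop ℝ) + ((E + h (ρ p) : ℝ) : WithTop ℝ) := by
              simp
          _ ≤ Kdeg (HahnSeries.single (0 : ℝ) ε) + Kdeg (F1 p) :=
              add_le_add (le_of_eq (Kdeg_single hε0).symm) (hF1lb p)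
          _ = Kdeg (HahnSeries.single (0 : ℝ) ε * F1 p) := (Kdeg_mul _ _).symm
    · rw [HahnSeries.coeff_add]
      have hc : (HahnSeries.single (0 : ℝ) ε * F1 p).coeff (E + h (ρ p)) = ε * c1 p := by
        have hsc := HahnSeries.coeff_single_mul_add (r := ε) (x := F1 p)
          (a := E + h (ρ p)) (b := 0)
        rw [add_zero] at hsc
        rw [hsc, hc1def]
      rw [hc]
      exact hεgood p
  -- the inner part of the solution
  set X : Fin 3 → K := fun p => M.det⁻¹ * Matrix.cramer M w p with hXdef
  have hXdeg : ∀ p, Kdeg (X p) = ((h (ρ p) : ℝ) : WithTop ℝ) := by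
    intro p
    simp only [hXdef]
    rw [Kdeg_mul, Kdeg_inv hdetM, hG p, ← WithTop.coe_add]
    congr 1; ring
  -- assemble the solution
  set x : Fin 6 → K :=
    fun j => if j = u then X 0 else if j = v then X 1 else if j = y then X 2 else xout j
    with hxdef
  refine ⟨x, ?_, ?_⟩
  · intro j
    simp only [hxdef]
    split_ifs with hju hjv hjy
    · subst hju
      rw [hXdeg 0]
      simp [hρ]
    · subst hjv
      rw [hXdeg 1]
      simp [hρ]
    · subst hjy
      rw [hXdeg 2]
      simp [hρ]
    · exact hxoutdeg j
  · intro i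
    have hsplit := Finset.sum_add_sum_compl ({u, v, y} : Finset (Fin 6)) (fun j => A j i * x j)
    rw [← hScdef] at hsplit
    have hTsum : ∑ j ∈ ({u, v, y} : Finset (Fin 6)), A j i * x j
        = A u i * X 0 + A v i * X 1 + A y i * X 2 := by
      rw [show ({u, v, y} : Finset (Fin 6)) = insert u (insert v {y}) from rfl,
        Finset.sum_insert (by simp [huv, huy]), Finset.sum_insert (by simp [hvy]),
        Finset.sum_singleton]
      simp only [hxdef, if_pos rfl, if_neg huv.symm, if_neg huy.symm, if_neg hvy.symm]
      exact (add_assoc _ _ _).symm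
    have hcsum : ∑ j ∈ Sc, A j i * x j = -w i := by
      have hnw : -w i = ∑ j ∈ Sc, A j i * xout j := by
        simp only [hwdef, neg_neg]
      rw [hnw]
      refine Finset.sum_congr rfl fun j hj => ?_
      have hj' : j ≠ u ∧ j ≠ v ∧ j ≠ y := by
        simpa [hScdef, Finset.mem_compl, not_or] using hj
      simp only [hxdef, if_neg hj'.1, if_neg hj'.2.1, if_neg hj'.2.2]
    have hwi : A u i * X 0 + A v i * X 1 + A y i * X 2 = w i := by
      have hcr := congrFun (Matrix.mulVec_cramer M w) i
      have hexp : (M.mulVec (Matrix.cramer M w)) i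
          = A u i * Matrix.cramer M w 0 + A v i * Matrix.cramer M w 1
            + A y i * Matrix.cramer M w 2 := by
        simp only [Matrix.mulVec, dotProduct, Fin.sum_univ_three, hMdef, hρ, Matrix.transpose_apply, Matrix.submatrix_apply]; simp
      have key : A u i * Matrix.cramer M w 0 + A v i * Matrix.cramer M w 1
          + A y i * Matrix.cramer M w 2 = M.det * w i := by
        rw [← hexp, hcr]; rfl
      simp only [hXdef]
      calc A u i * (M.det⁻¹ * Matrix.cramer M w 0) + A v i * (M.det⁻¹ * Matrix.cramer M w 1)
            + A y i * (M.det⁻¹ * Matrix.cramer M w 2)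
          = M.det⁻¹ * (A u i * Matrix.cramer M w 0 + A v i * Matrix.cramer M w 1
            + A y i * Matrix.cramer M w 2) := by ring
        _ = M.det⁻¹ * (M.det * w i) := by rw [key]
        _ = w i := by rw [← mul_assoc, inv_mul_cancel₀ hdetM0, one_mul]
    rw [← hsplit, hTsum, hcsum, hwi, add_neg_cancel]


end
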